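/- Let H be a Hermitian operator on a finite-dimensional complex Hilbert space with spectral decomposition H = ∑_{μ∈ι} E_μ P_μ. Then for every β > 0 and every operator A, ∫_ℝ φ_β(t) τ^H_t(A) dt = ∑_{μ∈ι} ∑_{ν∈ι} e^{−(E_μ−E_ν)²/(4β²)} P_μ A P_ν. -/

import Mathlib

open MeasureTheory Real

/-- The Heisenberg time evolution `τ^H_s(A) = e^{isH} A e^{-isH}`. -/
noncomputable def heis {V : Type*} [NormedAddCommGroup V] [NormedSpace ℂ V]
    (H : V →L[ℂ] V) (s : ℝ) (A : V →L[ℂ] V) : V →L[ℂ] V :=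
  NormedSpace.exp ((Complex.I * (s : ℂ)) • H) * A *
    NormedSpace.exp ((-(Complex.I * (s : ℂ))) • H)

/-- The Gaussian filter `φ_β(t) = (β/√π) e^{-β²t²}`. -/
noncomputable def phi (β t : ℝ) : ℝ := (β / Real.sqrt π) * Real.exp (-(β ^ 2 * t ^ 2))

section aux

variable {V : Type*} [NormedAddCommGroup V] [InnerProductSpace ℂ V] [FiniteDimensional ℂ V]
variable {ι : Type*} [Fintype ι]

lemma pow_spectral (a : ι → ℂ) (Pr : ι → (V →L[ℂ] V))
    (hPidem : ∀ μ, Pr μ * Pr μ = Pr μ)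
    (hPorth : ∀ μ ν, μ ≠ ν → Pr μ * Pr ν = 0)
    (hPsum : ∑ μ, Pr μ = 1) (n : ℕ) :
    (∑ μ, a μ • Pr μ) ^ n = ∑ μ, (a μ) ^ n • Pr μ := by
  induction n with
  | zero => simpa using hPsum.symm
  | succ n ih =>
    rw [pow_succ, ih, Finset.sum_mul]
    refine Finset.sum_congr rfl fun μ _ => ?_
    rw [Finset.mul_sum]
    rw [Finset.sum_eq_single μ]
    · rw [smul_mul_assoc, mul_smul_comm, hPidem, smul_smul, pow_succ]
    · intro ν _ hν
      rw [smul_mul_assoc, mul_smul_comm, hPorth μ ν (Ne.symm hν), smul_zero, smul_zero]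
    · simp

lemma exp_spectral (a : ι → ℂ) (Pr : ι → (V →L[ℂ] V))
    (hPidem : ∀ μ, Pr μ * Pr μ = Pr μ)
    (hPorth : ∀ μ ν, μ ≠ ν → Pr μ * Pr ν = 0)
    (hPsum : ∑ μ, Pr μ = 1) :
    NormedSpace.exp (∑ μ, a μ • Pr μ) = ∑ μ, NormedSpace.exp (a μ) • Pr μ := by
  rw [NormedSpace.exp_eq_tsum ℂ]
  have h1 : ∀ n : ℕ, ((n.factorial : ℂ))⁻¹ • (∑ μ, a μ • Pr μ) ^ n
      = ∑ μ, (((n.factorial : ℂ))⁻¹ • (a μ) ^ n) • Pr μ := by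
    intro n
    rw [pow_spectral a Pr hPidem hPorth hPsum, Finset.smul_sum]
    simp [smul_smul]
  simp_rw [h1]
  rw [Summable.tsum_finsetSum (fun μ _ => ((NormedSpace.expSeries_summable' (𝕂 := ℂ) (a μ)).smul_const (Pr μ)))]
  refine Finset.sum_congr rfl fun μ _ => ?_
  rw [Summable.tsum_smul_const (NormedSpace.expSeries_summable' (𝕂 := ℂ) (a μ)),
    NormedSpace.exp_eq_tsum ℂ]

lemma heis_spectral (E : ι → ℝ) (Pr : ι → (V →L[ℂ] V))
    (hPidem : ∀ μ, Pr μ * Pr μ = Pr μ)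
    (hPorth : ∀ μ ν, μ ≠ ν → Pr μ * Pr ν = 0)
    (hPsum : ∑ μ, Pr μ = 1)
    (H : V →L[ℂ] V) (hH : H = ∑ μ, (E μ : ℂ) • Pr μ) (t : ℝ) (A : V →L[ℂ] V) :
    heis H t A = ∑ μ, ∑ ν,
      Complex.exp (Complex.I * (t : ℂ) * ((E μ : ℂ) - (E ν : ℂ))) • (Pr μ * A * Pr ν) := by
  have key : ∀ c : ℂ, NormedSpace.exp (c • H)
      = ∑ μ, NormedSpace.exp (c * (E μ : ℂ)) • Pr μ := by
    intro c
    rw [hH, Finset.smul_sum]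
    simp_rw [smul_smul]
    exact exp_spectral _ Pr hPidem hPorth hPsum
  rw [heis, key, key]
  rw [Finset.sum_mul, Finset.sum_mul]
  refine Finset.sum_congr rfl fun μ _ => ?_
  rw [Finset.mul_sum]
  refine Finset.sum_congr rfl fun ν _ => ?_
  rw [smul_mul_assoc, smul_mul_assoc, mul_smul_comm, smul_smul, ← Complex.exp_eq_exp_ℂ,
    ← Complex.exp_add]
  congr 2
  ring

lemma gauss_int (β : ℝ) (hβ : 0 < β) (ω : ℝ) :
    (∫ t : ℝ, ((phi β t : ℂ) * Complex.exp (Complex.I * (t : ℂ) * (ω : ℂ))))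
      = (Real.exp (-(ω ^ 2 / (4 * β ^ 2))) : ℂ) := by
  have hb : (0 : ℝ) < (((β : ℂ)) ^ 2).re := by
    rw [← Complex.ofReal_pow, Complex.ofReal_re]; positivity
  have h1 : ∀ t : ℝ, ((phi β t : ℂ) * Complex.exp (Complex.I * (t : ℂ) * (ω : ℂ)))
      = ((β / Real.sqrt π : ℝ) : ℂ) *
        (Complex.exp (Complex.I * (ω : ℂ) * (t : ℂ)) *
          Complex.exp (-((β : ℂ)) ^ 2 * (t : ℂ) ^ 2)) := by
    intro t
    rw [phi]
    push_cast
    rw [mul_assoc, ← Complex.exp_add, ← Complex.exp_add]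
    congr 2
    ring
  simp_rw [h1]
  rw [integral_const_mul, fourierIntegral_gaussian hb (ω : ℂ)]
  have h2 : ((Real.pi : ℂ) / ((β : ℂ)) ^ 2) ^ (1 / 2 : ℂ)
      = ((Real.sqrt π / β : ℝ) : ℂ) := by
    rw [show ((Real.pi : ℂ) / ((β : ℂ)) ^ 2) = (((π / β ^ 2 : ℝ)) : ℂ) by push_cast; ring]
    rw [show (1 / 2 : ℂ) = ((1 / 2 : ℝ) : ℂ) by norm_num,
      ← Complex.ofReal_cpow (by positivity) (1 / 2 : ℝ)]
    norm_cast
    rw [← Real.sqrt_eq_rpow, Real.sqrt_div (le_of_lt pi_pos), Real.sqrt_sq hβ.le]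
  rw [h2]
  have hπ : Real.sqrt π ≠ 0 := by positivity
  have hβ' : β ≠ 0 := hβ.ne'
  have hc : (((β / Real.sqrt π : ℝ)) : ℂ) * (((Real.sqrt π / β : ℝ)) : ℂ) = 1 := by
    rw [← Complex.ofReal_mul, show (β / Real.sqrt π) * (Real.sqrt π / β) = 1 by field_simp,
      Complex.ofReal_one]
  rw [← mul_assoc, hc, one_mul, Complex.ofReal_exp]
  congr 1
  push_cast
  ring

lemma key_integrable (β : ℝ) (hβ : 0 < β) (ω : ℝ) :
    Integrable (fun t : ℝ => ((phi β t : ℂ) * Complex.exp (Complex.I * (t : ℂ) * (ω : ℂ)))) := by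
  have hb : (0 : ℝ) < (((β : ℂ)) ^ 2).re := by
    rw [← Complex.ofReal_pow, Complex.ofReal_re]; positivity
  have h := (integrable_cexp_quadratic hb (Complex.I * (ω : ℂ)) 0).const_mul
    (((β / Real.sqrt π : ℝ)) : ℂ)
  refine h.congr (Filter.Eventually.of_forall fun t => ?_)
  simp only [phi]
  push_cast
  rw [add_zero, show (-(β : ℂ) ^ 2 * (t : ℂ) ^ 2 + Complex.I * (ω : ℂ) * (t : ℂ))
      = (-((β : ℂ) ^ 2 * (t : ℂ) ^ 2)) + Complex.I * (t : ℂ) * (ω : ℂ) by ring,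
    Complex.exp_add]
  ring

end aux

set_option synthInstance.maxHeartbeats 400000
set_option maxHeartbeats 1000000

theorem stmt4 {V : Type*} [NormedAddCommGroup V] [InnerProductSpace ℂ V]
    [FiniteDimensional ℂ V]
    {ι : Type*} [Fintype ι] (E : ι → ℝ) (Pr : ι → (V →L[ℂ] V))
    (hPsa : ∀ μ, IsSelfAdjoint (Pr μ))
    (hPidem : ∀ μ, Pr μ * Pr μ = Pr μ)
    (hPorth : ∀ μ ν, μ ≠ ν → Pr μ * Pr ν = 0)
    (hPsum : ∑ μ, Pr μ = 1)
    (H : V →L[ℂ] V) (hH : H = ∑ μ, (E μ : ℂ) • Pr μ)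
    (β : ℝ) (hβ : 0 < β) (A : V →L[ℂ] V) :
    ∫ t : ℝ, phi β t • heis H t A =
      ∑ μ, ∑ ν, Real.exp (-((E μ - E ν) ^ 2 / (4 * β ^ 2))) • (Pr μ * A * Pr ν) := by
  have hint : ∀ t : ℝ, phi β t • heis H t A
      = ∑ μ, ∑ ν, ((phi β t : ℂ) *
          Complex.exp (Complex.I * (t : ℂ) * ((E μ - E ν : ℝ) : ℂ))) • (Pr μ * A * Pr ν) := by
    intro t
    rw [heis_spectral E Pr hPidem hPorth hPsum H hH t A, Finset.smul_sum]
    refine Finset.sum_congr rfl fun μ _ => ?_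
    rw [Finset.smul_sum]
    refine Finset.sum_congr rfl fun ν _ => ?_
    rw [mul_smul, Complex.coe_smul]
    push_cast
    ring_nf
  simp_rw [hint]
  rw [integral_finset_sum _ (fun μ _ => integrable_finset_sum _ (fun ν _ =>
    (key_integrable β hβ (E μ - E ν)).smul_const (Pr μ * A * Pr ν)))]
  refine Finset.sum_congr rfl fun μ _ => ?_
  rw [integral_finset_sum _ (fun ν _ =>
    (key_integrable β hβ (E μ - E ν)).smul_const (Pr μ * A * Pr ν))]
  refine Finset.sum_congr rfl fun ν _ => ?_
  rw [integral_smul_const, gauss_int β hβ (E μ - E ν), Complex.coe_smul]
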